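/- Let a ∈ ℝ and let h be a function with h(conj s) = conj(h(s)), holomorphic and nonvanishing on the line Re s = a, with h(a) > 0. Let φ(τ) be the continuous determination of arg h(a+iτ) with φ(0)=0. Then for the function f(s) = h(s) − h(2a−s), a point s = a+iτ with τ ∈ ℝ is a zero of f if and only if φ(τ) ≡ 0 (mod π); and for f(s) = h(s) + h(2a−s), s = a+iτ is a zero of f if and only if φ(τ) ≡ π/2 (mod π). -/

import Mathlib

open Complex

theorem stmt_3 (a : ℝ) (h : ℂ → ℂ) (φ : ℝ → ℝ)
    (hholo : ∀ τ : ℝ, DifferentiableAt ℂ h ((a : ℂ) + τ * I))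
    (hreal : ∀ s : ℂ, h (starRingEnd ℂ s) = starRingEnd ℂ (h s))
    (hne : ∀ τ : ℝ, h ((a : ℂ) + τ * I) ≠ 0)
    (hpos : 0 < (h (a : ℂ)).re)
    (hφc : Continuous φ) (hφ0 : φ 0 = 0)
    (hpolar : ∀ τ : ℝ, h ((a : ℂ) + τ * I) =
      (‖h ((a : ℂ) + τ * I)‖ : ℂ) * Complex.exp (φ τ * I)) :
    ∀ τ : ℝ,
      (h ((a : ℂ) + τ * I) - h (2 * a - ((a : ℂ) + τ * I)) = 0 ↔
        ∃ k : ℤ, φ τ = k * Real.pi) ∧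
      (h ((a : ℂ) + τ * I) + h (2 * a - ((a : ℂ) + τ * I)) = 0 ↔
        ∃ k : ℤ, φ τ = Real.pi / 2 + k * Real.pi) := by
  intro τ
  set s : ℂ := (a : ℂ) + τ * I with hs
  have hconj : 2 * (a : ℂ) - s = starRingEnd ℂ s := by
    apply Complex.ext <;> simp [hs] <;> ring
  have h2 : h (2 * (a : ℂ) - s) = starRingEnd ℂ (h s) := by
    rw [hconj, hreal]
  have hr : (‖h s‖ : ℂ) ≠ 0 := by
    simp only [ne_eq, Complex.ofReal_eq_zero, map_eq_zero, norm_eq_zero]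
    exact hne τ
  obtain ⟨R, hRne, hRc, hpe⟩ : ∃ R : ℂ, R ≠ 0 ∧ starRingEnd ℂ R = R ∧
      h s = R * Complex.exp (φ τ * I) :=
    ⟨(‖h s‖ : ℂ), hr, Complex.conj_ofReal _, hpolar τ⟩
  have hcexp : starRingEnd ℂ (h s) = R * Complex.exp (-(φ τ) * I) := by
    rw [hpe, map_mul, hRc, ← Complex.exp_conj]
    congr 2
    simp [Complex.ext_iff]
  have e1 : Complex.exp ((φ τ : ℂ) * I) =
      Complex.cos (φ τ) + Complex.sin (φ τ) * I := Complex.exp_mul_I _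
  have e2 : Complex.exp (-(φ τ : ℂ) * I) =
      Complex.cos (φ τ) - Complex.sin (φ τ) * I := by
    rw [Complex.exp_mul_I, Complex.cos_neg, Complex.sin_neg]; ring
  have hdiff : h s - h (2 * (a : ℂ) - s) = R * (2 * I * Complex.sin (φ τ)) := by
    rw [h2, hcexp, hpe, e1, e2]; ring
  have hsum : h s + h (2 * (a : ℂ) - s) = R * (2 * Complex.cos (φ τ)) := by
    rw [h2, hcexp, hpe, e1, e2]; ring
  constructor
  · rw [hdiff]
    constructor
    · intro h0
      have hsin : Complex.sin (φ τ) = 0 := by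
        rcases mul_eq_zero.mp h0 with h1 | h1
        · exact absurd h1 hRne
        · rcases mul_eq_zero.mp h1 with h2 | h2
          · exfalso; simpa using h2
          · exact h2
      rw [Complex.sin_eq_zero_iff] at hsin
      obtain ⟨k, hk⟩ := hsin
      exact ⟨k, by exact_mod_cast hk⟩
    · rintro ⟨k, hk⟩
      have hsin : Complex.sin (φ τ) = 0 := by
        rw [Complex.sin_eq_zero_iff]
        exact ⟨k, by exact_mod_cast hk⟩
      rw [hsin]; ring
  · rw [hsum]
    constructor
    · intro h0
      have hcos : Complex.cos (φ τ) = 0 := by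
        rcases mul_eq_zero.mp h0 with h1 | h1
        · exact absurd h1 hRne
        · rcases mul_eq_zero.mp h1 with h2 | h2
          · norm_num at h2
          · exact h2
      rw [Complex.cos_eq_zero_iff] at hcos
      obtain ⟨k, hk⟩ := hcos
      refine ⟨k, ?_⟩
      have : (φ τ : ℂ) = Real.pi / 2 + k * Real.pi := by rw [hk]; push_cast; ring
      exact_mod_cast this
    · rintro ⟨k, hk⟩
      have hcos : Complex.cos (φ τ) = 0 := by
        rw [Complex.cos_eq_zero_iff]
        refine ⟨k, ?_⟩
        rw [hk]; push_cast; ring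
      rw [hcos]; ring
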